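/- Let F be a free group of rank 2 with basis {f₀, f₁}, let G = F × ℤ, and let H = ⟨(f₀, 0), (f₁, 1)⟩ ≤ G. Then H ∩ (F × {0}) is a nontrivial normal subgroup of H of infinite index in H, and is not finitely generated. -/

import Mathlib

open SemidirectProduct Multiplicative

lemma toMultApply (e : (ℤ →₀ ℤ) ≃+ (ℤ →₀ ℤ)) (x : Multiplicative (ℤ →₀ ℤ)) :
    Multiplicative.toAdd (AddEquiv.toMultiplicative e x) = e (Multiplicative.toAdd x) := rfl

noncomputable def shiftAut : Multiplicative ℤ →* MulAut (Multiplicative (ℤ →₀ ℤ)) where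
  toFun n := AddEquiv.toMultiplicative (Finsupp.domCongr (M := ℤ) (Equiv.addRight n.toAdd))
  map_one' := by
    refine MulEquiv.ext fun x => ?_
    refine Multiplicative.toAdd.injective (Finsupp.ext fun k => ?_)
    simp [toMultApply, Finsupp.domCongr_apply]
    rfl
  map_mul' := by
    intro a b
    refine MulEquiv.ext fun x => ?_
    refine Multiplicative.toAdd.injective (Finsupp.ext fun k => ?_)
    simp only [MulAut.mul_apply, toMultApply, Finsupp.domCongr_apply,
      Finsupp.equivMapDomain_apply]
    congr 1
    simp only [toAdd_mul, Equiv.addRight_symm, Equiv.coe_addRight]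
    ring

lemma shiftAut_apply (n : Multiplicative ℤ) (x : Multiplicative (ℤ →₀ ℤ)) (k : ℤ) :
    Multiplicative.toAdd (shiftAut n x) k = Multiplicative.toAdd x (k - n.toAdd) := by
  simp only [shiftAut, MonoidHom.coe_mk, OneHom.coe_mk, toMultApply, Finsupp.domCongr_apply,
    Finsupp.equivMapDomain_apply, Equiv.addRight_symm, Equiv.coe_addRight, sub_eq_add_neg]

noncomputable def ρ : FreeGroup (Fin 2) →* Multiplicative (ℤ →₀ ℤ) ⋊[shiftAut] Multiplicative ℤ :=
  FreeGroup.lift ![inl (Multiplicative.ofAdd (Finsupp.single 0 1)), inr (Multiplicative.ofAdd 1)]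

@[simp] lemma rho_of0 : ρ (FreeGroup.of 0) = inl (Multiplicative.ofAdd (Finsupp.single 0 1)) := by
  simp [ρ]

@[simp] lemma rho_of1 : ρ (FreeGroup.of 1) = inr (Multiplicative.ofAdd 1) := by
  simp [ρ]

lemma mk_single_true (x : Fin 2) : FreeGroup.mk [(x, true)] = FreeGroup.of x := rfl

lemma mk_single_false (x : Fin 2) : FreeGroup.mk [(x, false)] = (FreeGroup.of x)⁻¹ := by
  rw [← mk_single_true, FreeGroup.inv_mk]; rfl

lemma rho_bound (l : List (Fin 2 × Bool)) (k : ℤ)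
    (hk : Multiplicative.toAdd (ρ (FreeGroup.mk l)).left k ≠ 0) : |k| ≤ (l.length : ℤ) := by
  induction l generalizing k with
  | nil => exact absurd (by rw [← FreeGroup.one_eq_mk, map_one]; rfl) hk
  | cons p l ih =>
    obtain ⟨x, b⟩ := p
    rw [show ((x,b) :: l) = [(x,b)] ++ l from rfl, ← FreeGroup.mul_mk, map_mul,
      SemidirectProduct.mul_left, toAdd_mul, Finsupp.add_apply] at hk
    have hstep : Multiplicative.toAdd (ρ (FreeGroup.mk [(x,b)])).left k ≠ 0 ∨
        Multiplicative.toAdd ((shiftAut (ρ (FreeGroup.mk [(x,b)])).right) (ρ (FreeGroup.mk l)).left) k ≠ 0 := by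
      by_contra h
      push_neg at h
      rw [h.1, h.2, add_zero] at hk
      exact hk rfl
    have h2 : |k - (Multiplicative.toAdd (ρ (FreeGroup.mk [(x,b)])).right)| ≤ (l.length : ℤ) ∨
        Multiplicative.toAdd (ρ (FreeGroup.mk [(x,b)])).left k ≠ 0 := by
      rcases hstep with h | h
      · exact Or.inr h
      · rw [shiftAut_apply] at h
        exact Or.inl (ih _ h)
    have hx : x = 0 ∨ x = 1 := by omega
    rcases hx with rfl | rfl <;> cases b <;>
      simp only [mk_single_true, mk_single_false, map_inv, rho_of0, rho_of1,
        left_inl, right_inl, left_inr, right_inr, inv_left, inv_right, map_one, map_inv,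
        MulAut.one_apply, toAdd_inv, toAdd_ofAdd, toAdd_one, Finsupp.neg_apply, neg_ne_zero,
        Finsupp.single_apply, Finsupp.coe_zero, Pi.zero_apply, ne_eq, List.length_cons,
        inv_one] at h2
    all_goals (
      rcases h2 with h | h)
    all_goals first
      | exact absurd trivial h
      | (rw [abs_le] at h ⊢; simp only [List.length_cons] at h ⊢; push_cast at h ⊢; omega)
      | (have hk0 : k = 0 := by
           by_contra hne
           exact h (if_neg fun h' => hne h'.symm)
         subst hk0
         rw [abs_zero]
         positivity)

lemma rho_pow1 (n : ℕ) : ρ (FreeGroup.of 1 ^ n) = inr (Multiplicative.ofAdd (n : ℤ)) := by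
  rw [map_pow, rho_of1, ← map_pow]
  congr 1
  rw [← ofAdd_nsmul]
  norm_num

lemma rho_conj (n : ℕ) :
    Multiplicative.toAdd
      (ρ (FreeGroup.of 1 ^ n * FreeGroup.of 0 * (FreeGroup.of 1 ^ n)⁻¹)).left (n : ℤ) = 1 := by
  rw [map_mul, map_mul, map_inv, rho_pow1, rho_of0, ← map_inv, ← SemidirectProduct.inl_aut,
    left_inl, shiftAut_apply]
  rw [toAdd_ofAdd, toAdd_ofAdd, sub_self, Finsupp.single_eq_same]

noncomputable def φm : FreeGroup (Fin 2) →* Multiplicative ℤ := SemidirectProduct.rightHom.comp ρ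

lemma right_eq_φm (w : FreeGroup (Fin 2)) : (ρ w).right = φm w := rfl

noncomputable def ψ : (FreeGroup (Fin 2) × Multiplicative ℤ) →* Multiplicative ℤ :=
  (φm.comp (MonoidHom.fst _ _)) * (MonoidHom.snd _ _)⁻¹

/-- for `H = ⟨(f₀,0),(f₁,1)⟩ ≤ F₂ × ℤ`, the subgroup `H ∩ (F₂ × {0})`
is nontrivial, normal of infinite index in `H`, and not finitely generated. -/
theorem stmt_11 (H : Subgroup (FreeGroup (Fin 2) × Multiplicative ℤ))
    (hH : H = Subgroup.closure
      {(FreeGroup.of 0, (1 : Multiplicative ℤ)), (FreeGroup.of 1, Multiplicative.ofAdd 1)}) :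
    H ⊓ (MonoidHom.snd (FreeGroup (Fin 2)) (Multiplicative ℤ)).ker ≠ ⊥ ∧
    ((H ⊓ (MonoidHom.snd (FreeGroup (Fin 2)) (Multiplicative ℤ)).ker).subgroupOf H).Normal ∧
    ((H ⊓ (MonoidHom.snd (FreeGroup (Fin 2)) (Multiplicative ℤ)).ker).subgroupOf H).index = 0 ∧
    ¬ (H ⊓ (MonoidHom.snd (FreeGroup (Fin 2)) (Multiplicative ℤ)).ker).FG := by
  have hgen0 : ((FreeGroup.of 0, (1 : Multiplicative ℤ))) ∈ H := by
    rw [hH]; exact Subgroup.subset_closure (by simp)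
  have hgen1 : ((FreeGroup.of 1, Multiplicative.ofAdd (1:ℤ))) ∈ H := by
    rw [hH]; exact Subgroup.subset_closure (by simp)
  have hHψ : ∀ g ∈ H, φm g.1 = g.2 := by
    have hle : H ≤ ψ.ker := by
      rw [hH, Subgroup.closure_le]
      rintro x hx
      simp only [Set.mem_insert_iff, Set.mem_singleton_iff] at hx
      rcases hx with rfl | rfl <;>
        simp [SetLike.mem_coe, MonoidHom.mem_ker, ψ, φm, rho_of0, rho_of1]
    intro g hg
    have h1 : ψ g = 1 := hle hg
    have : φm g.1 * g.2⁻¹ = 1 := h1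
    rwa [mul_inv_eq_one] at this
  refine ⟨?_, ?_, ?_, ?_⟩
  · -- nontrivial
    intro hbot
    have hmem : ((FreeGroup.of 0, (1 : Multiplicative ℤ))) ∈
        H ⊓ (MonoidHom.snd (FreeGroup (Fin 2)) (Multiplicative ℤ)).ker :=
      ⟨hgen0, show (MonoidHom.snd _ _) (FreeGroup.of 0, (1 : Multiplicative ℤ)) = 1 from rfl⟩
    rw [hbot, Subgroup.mem_bot] at hmem
    have h1 : FreeGroup.of (0 : Fin 2) = 1 := congrArg Prod.fst hmem
    have h2 := congrArg (fun w => Multiplicative.toAdd (ρ w).left (0:ℤ)) h1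
    simp only [map_one, rho_of0, left_inl, one_left, toAdd_ofAdd, toAdd_one,
      Finsupp.single_eq_same, Finsupp.coe_zero, Pi.zero_apply] at h2
    exact one_ne_zero h2
  · -- normal
    constructor
    intro n hn g
    rw [Subgroup.mem_subgroupOf] at hn ⊢
    have hn2 : (MonoidHom.snd (FreeGroup (Fin 2)) (Multiplicative ℤ)) (↑n) = 1 :=
      MonoidHom.mem_ker.1 hn.2
    refine ⟨SetLike.coe_mem _, MonoidHom.mem_ker.2 ?_⟩
    rw [Subgroup.coe_mul, Subgroup.coe_mul, Subgroup.coe_inv, map_mul, map_mul, map_inv, hn2,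
      mul_one, mul_inv_cancel]
  · -- index zero
    set f : H →* Multiplicative ℤ := (MonoidHom.snd _ _).comp H.subtype with hf
    have hker : (H ⊓ (MonoidHom.snd (FreeGroup (Fin 2)) (Multiplicative ℤ)).ker).subgroupOf H
        = f.ker := by
      ext x
      simp [Subgroup.mem_subgroupOf, Subgroup.mem_inf, MonoidHom.mem_ker, hf, x.2, Subgroup.mem_prod]
    rw [hker, Subgroup.index_ker]
    have hsurj : Function.Surjective f := by
      intro t
      refine ⟨⟨(FreeGroup.of 1, Multiplicative.ofAdd 1) ^ (Multiplicative.toAdd t),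
        Subgroup.zpow_mem H hgen1 _⟩, ?_⟩
      show (MonoidHom.snd (FreeGroup (Fin 2)) (Multiplicative ℤ))
          ((FreeGroup.of 1, Multiplicative.ofAdd 1) ^ (Multiplicative.toAdd t)) = t
      rw [map_zpow]
      apply Multiplicative.toAdd.injective
      simp [toAdd_zpow]
    rw [MonoidHom.range_eq_top.2 hsurj]
    have : Nat.card (⊤ : Subgroup (Multiplicative ℤ)) = Nat.card (Multiplicative ℤ) :=
      Nat.card_congr Subgroup.topEquiv.toEquiv
    rw [this]
    exact Nat.card_eq_zero_of_infinite
  · -- not finitely generated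
    rintro ⟨S, hS⟩
    set K := H ⊓ (MonoidHom.snd (FreeGroup (Fin 2)) (Multiplicative ℤ)).ker with hK
    set L : ℕ := S.sup (fun s => s.1.toWord.length) with hLdef
    have key : ∀ g ∈ Subgroup.closure (S : Set (FreeGroup (Fin 2) × Multiplicative ℤ)),
        (ρ g.1).right = 1 ∧
        ∀ k : ℤ, Multiplicative.toAdd (ρ g.1).left k ≠ 0 → |k| ≤ (L:ℤ) := by
      intro g hg
      induction hg using Subgroup.closure_induction with
      | mem s hs =>
        have hsK : s ∈ K := by rw [← hS]; exact Subgroup.subset_closure hs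
        constructor
        · rw [right_eq_φm, hHψ s hsK.1]
          exact MonoidHom.mem_ker.1 hsK.2
        · intro k hk
          have hb := rho_bound s.1.toWord k (by rwa [FreeGroup.mk_toWord])
          refine hb.trans ?_
          exact_mod_cast Nat.cast_le.2
            (Finset.le_sup (f := fun t : FreeGroup (Fin 2) × Multiplicative ℤ => t.1.toWord.length) (Finset.mem_coe.1 hs))
      | one =>
        constructor
        · simp
        · intro k hk
          simp at hk
      | mul x y hx hy ihx ihy =>
        constructor
        · rw [Prod.fst_mul, map_mul, mul_right, ihx.1, ihy.1, mul_one]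
        · intro k hk
          rw [Prod.fst_mul, map_mul, mul_left, toAdd_mul, Finsupp.add_apply, ihx.1, map_one,
            MulAut.one_apply] at hk
          rcases (by by_contra h; push_neg at h; rw [h.1, h.2, add_zero] at hk; exact hk rfl :
            Multiplicative.toAdd (ρ x.1).left k ≠ 0 ∨
            Multiplicative.toAdd (ρ y.1).left k ≠ 0) with h | h
          · exact ihx.2 k h
          · exact ihy.2 k h
      | inv x hx ihx =>
        constructor
        · rw [Prod.fst_inv, map_inv, inv_right, ihx.1, inv_one]
        · intro k hk
          rw [Prod.fst_inv, map_inv, inv_left, ihx.1, inv_one, map_one, MulAut.one_apply,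
            toAdd_inv, Finsupp.neg_apply, neg_ne_zero] at hk
          exact ihx.2 k hk
    have hc : ((FreeGroup.of 1, Multiplicative.ofAdd (1:ℤ)))^(L+1) *
        (FreeGroup.of 0, (1 : Multiplicative ℤ)) *
        (((FreeGroup.of 1, Multiplicative.ofAdd (1:ℤ)))^(L+1))⁻¹ ∈ K := by
      refine Subgroup.mem_inf.2 ⟨?_, MonoidHom.mem_ker.2 ?_⟩
      · exact Subgroup.mul_mem _ (Subgroup.mul_mem _ (Subgroup.pow_mem _ hgen1 _) hgen0)
          (Subgroup.inv_mem _ (Subgroup.pow_mem _ hgen1 _))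
      · rw [map_mul, map_mul, map_inv, map_pow]
        simp
    rw [← hS] at hc
    obtain ⟨-, hbd⟩ := key _ hc
    have hfst : ((((FreeGroup.of 1, Multiplicative.ofAdd 1) :
          FreeGroup (Fin 2) × Multiplicative ℤ))^(L+1) *
        (FreeGroup.of 0, (1 : Multiplicative ℤ)) *
        ((((FreeGroup.of 1, Multiplicative.ofAdd 1) :
          FreeGroup (Fin 2) × Multiplicative ℤ))^(L+1))⁻¹).1
        = FreeGroup.of 1 ^ (L+1) * FreeGroup.of 0 * (FreeGroup.of 1 ^ (L+1))⁻¹ := by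
      rw [Prod.fst_mul, Prod.fst_mul, Prod.fst_inv]
      norm_num
    have := hbd ((L+1 : ℕ) : ℤ) (by simp only [hfst]; rw [rho_conj (L+1)]; exact one_ne_zero)
    rw [abs_of_nonneg (by positivity)] at this
    exact absurd (Nat.cast_le.1 this) (by omega)
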